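/- Let Σ = {a, b}, let (n_j)_{j≥1} be a sequence of integers with n_j ≥ 2, and define α₀ = a, β₀ = b, α_{j+1} = (α_j² β_j)^{n_{j+1}}, β_{j+1} = (β_j² α_j)^{n_{j+1}}. Let N_k = |α_k|. Then for any k ≥ 0, the word α_{k+1} does not contain β_k³ (the cube of β_k) as a factor. -/

import Mathlib

mutual
/-- The word `α_j` over `{a, b}` (with `a := true`, `b := false`):
`α₀ = a`, `α_{j+1} = (α_j α_j β_j)^{n_{j+1}}`. -/
def wordA (n : ℕ → ℕ) : ℕ → List Bool
  | 0 => [true]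
  | j + 1 => (List.replicate (n (j + 1)) (wordA n j ++ wordA n j ++ wordB n j)).flatten

/-- The word `β_j`: `β₀ = b`, `β_{j+1} = (β_j β_j α_j)^{n_{j+1}}`. -/
def wordB (n : ℕ → ℕ) : ℕ → List Bool
  | 0 => [false]
  | j + 1 => (List.replicate (n (j + 1)) (wordB n j ++ wordB n j ++ wordA n j)).flatten
end

/-- `N_k = ∏_{j=1}^k (3 n_j)`, the common length of `α_k` and `β_k`. -/
def Nlen (n : ℕ → ℕ) (k : ℕ) : ℕ := ∏ j ∈ Finset.Icc 1 k, 3 * n j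

lemma count_flatten_replicate (x : Bool) (m : ℕ) (l : List Bool) :
    ((List.replicate m l).flatten).count x = m * l.count x := by
  induction m with
  | zero => simp
  | succ m ih => simp [List.replicate_succ, ih, Nat.succ_mul]; ring

lemma count_infix_double (x : Bool) (w s : List Bool) (h : s <:+: w ++ w)
    (hl : s.length = w.length) : s.count x = w.count x := by
  obtain ⟨p, t, hpt⟩ := h
  have hlen : p.length + (s.length + t.length) = w.length + w.length := by
    have := congrArg List.length hpt
    simpa [List.length_append] using this
  have hp : p.length ≤ w.length := by omega
  have hdrop : (w ++ w).drop p.length = s ++ t := by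
    rw [← hpt]; simp
  have hs : s = ((w ++ w).drop p.length).take s.length := by
    rw [hdrop]; simp
  rw [List.drop_append_of_le_length hp] at hs
  have hlen2 : (w.drop p.length).length = w.length - p.length := by simp
  have hs2 : s = w.drop p.length ++ w.take p.length := by
    rw [hs, List.take_append, hlen2, hl]
    congr 1
    · simp [List.take_take]
    · congr 1; omega
  have : (w.take p.length).count x + (w.drop p.length).count x = w.count x := by
    rw [← List.count_append, List.take_append_drop]
  rw [hs2, List.count_append]; omega

lemma infix_pow (m : ℕ) (w s : List Bool) (hm : 1 ≤ m)
    (h : s <:+: (List.replicate m w).flatten) (hl : s.length = w.length) :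
    s <:+: w ++ w := by
  induction m with
  | zero => omega
  | succ m ih =>
    rcases Nat.eq_zero_or_pos m with rfl | hm'
    · simp at h
      have : s = w := h.eq_of_length hl
      subst this
      exact (List.prefix_append s s).isInfix
    · have hrep : (List.replicate (m + 1) w).flatten = w ++ (List.replicate m w).flatten := by
        simp [List.replicate_succ]
      rw [hrep] at h
      obtain ⟨p, t, hpt⟩ := h
      by_cases hpw : w.length ≤ p.length
      · apply ih hm'
        have key : p.drop w.length ++ (s ++ t) = (List.replicate m w).flatten := by
          have h2 : (p ++ (s ++ t)).drop w.length = p.drop w.length ++ (s ++ t) :=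
            List.drop_append_of_le_length hpw
          rw [← h2, ← List.append_assoc, hpt]
          simp
        refine ⟨p.drop w.length, t, ?_⟩
        rw [List.append_assoc]
        exact key
      · push_neg at hpw
        -- R = w ++ R'
        obtain ⟨m', rfl⟩ : ∃ m', m = m' + 1 := ⟨m - 1, by omega⟩
        have hrep2 : (List.replicate (m' + 1) w).flatten = w ++ (List.replicate m' w).flatten := by
          simp [List.replicate_succ]
        rw [hrep2] at hpt
        set R' := (List.replicate m' w).flatten with hR'
        have hdrop : (w ++ w ++ R').drop p.length = s ++ t := by
          rw [List.append_assoc, ← hpt, List.append_assoc, List.drop_left]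
        have hple : p.length ≤ (w ++ w).length := by
          simp [List.length_append]; omega
        rw [List.drop_append_of_le_length hple] at hdrop
        have hs : s = (((w ++ w).drop p.length) ++ R').take s.length := by
          rw [hdrop]; simp
        have hlen3 : s.length ≤ ((w ++ w).drop p.length).length := by
          simp [List.length_append]; omega
        rw [List.take_append_of_le_length hlen3] at hs
        rw [hs]
        exact (((w++w).drop p.length).take_prefix s.length).isInfix.trans
          ((w++w).drop_suffix p.length).isInfix

lemma len_eq (n : ℕ → ℕ) : ∀ k, (wordA n k).length = (wordB n k).length := by
  intro k
  induction k with
  | zero => simp [wordA, wordB]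
  | succ k ih =>
    simp [wordA, wordB, List.length_flatten, List.map_replicate, List.sum_replicate, smul_eq_mul,
      List.length_append, ih]

lemma count_lt (n : ℕ → ℕ) (hn : ∀ j, 1 ≤ j → 2 ≤ n j) :
    ∀ k, (wordA n k).count false < (wordB n k).count false := by
  intro k
  induction k with
  | zero => simp [wordA, wordB]
  | succ k ih =>
    have hnk : 2 ≤ n (k + 1) := hn (k + 1) (by omega)
    show ((List.replicate (n (k+1)) _).flatten).count false < ((List.replicate (n (k+1)) _).flatten).count false
    rw [count_flatten_replicate, count_flatten_replicate]
    have hlt : List.count false (wordA n k ++ wordA n k ++ wordB n k)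
        < List.count false (wordB n k ++ wordB n k ++ wordA n k) := by
      simp only [List.count_append]; omega
    exact Nat.mul_lt_mul_of_pos_left hlt (by omega)

/-- `α_{k+1}` does not contain the cube `β_k³ = β_k β_k β_k` as a factor. -/
theorem stmt6 (n : ℕ → ℕ) (hn : ∀ j, 1 ≤ j → 2 ≤ n j) (k : ℕ) :
    ¬ (wordB n k ++ wordB n k ++ wordB n k) <:+: wordA n (k + 1) := by
  intro h
  set a := wordA n k with ha
  set b := wordB n k with hb
  have hlab : a.length = b.length := len_eq n k
  have hcd : a.count false < b.count false := count_lt n hn k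
  have hA : wordA n (k + 1) = (List.replicate (n (k+1)) (a ++ a ++ b)).flatten := rfl
  rw [hA] at h
  have hm : 1 ≤ n (k + 1) := le_trans (by omega) (hn (k+1) (by omega))
  have hl : (b ++ b ++ b).length = (a ++ a ++ b).length := by
    simp [List.length_append]; omega
  have h2 := infix_pow _ _ _ hm h hl
  have := count_infix_double false (a ++ a ++ b) (b ++ b ++ b) h2 hl
  simp only [List.count_append] at this
  omega
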